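/- arXiv:2106.15628 — 2 statements merged into one kernel-verified Lean document; each statement's English description precedes it below -/
import Mathlib

section
/- In the Clifford Hayden–Preskill setup, the purity of the reduced state on R C satisfies Tr(ρ_{RC}^2) = N_{I_D} / (d_R d_C), where N_{I_D} is the number of Pauli operators P_A on A with Λ_D(P_A) ≃ I_D. Equivalently, the Rényi-2 entropy is S^{(2)}_{RC} = log(d_C d_R / N_{I_D}). -/
open Matrix Kronecker BigOperators

/-- The `n`-qubit Pauli operator `X^x Z^z` (symplectic representation). -/
noncomputable def pauli {n : ℕ} (x z : Fin n → ZMod 2) :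
    Matrix (Fin n → ZMod 2) (Fin n → ZMod 2) ℂ :=
  fun j k => if j = k + x then ((-1 : ℂ)) ^ (∑ i, (z i * k i).val) else 0

/-- Reduced density matrix `ρ_{RC}` of the Hayden–Preskill state
`|Ψ⟩ = (I_R ⊗ U ⊗ I_{B̄})(|EPR⟩_{RA} ⊗ |EPR⟩_{BB̄})`, obtained by tracing
out `D` and `B̄`; concretely `Ψ(r,(c,d),b̄) = U_{(c,d),(r,b̄)}/√(d_A d_B)`. -/
noncomputable def rhoRC (nA nB nC nD : ℕ)
    (U : Matrix ((Fin nC → ZMod 2) × (Fin nD → ZMod 2))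
      ((Fin nA → ZMod 2) × (Fin nB → ZMod 2)) ℂ) :
    Matrix ((Fin nA → ZMod 2) × (Fin nC → ZMod 2))
      ((Fin nA → ZMod 2) × (Fin nC → ZMod 2)) ℂ :=
  fun p q => ((2 ^ nA * 2 ^ nB : ℂ))⁻¹ *
    ∑ d : Fin nD → ZMod 2, ∑ b : Fin nB → ZMod 2,
      U (p.2, d) (p.1, b) * (starRingEnd ℂ) (U (q.2, d) (q.1, b))

lemma zmod2_sum (f : ZMod 2 → ℂ) : ∑ t : ZMod 2, f t = f 0 + f 1 := by
  exact Fin.sum_univ_two f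

lemma char2_sum (u : ZMod 2) :
    ∑ t : ZMod 2, (-1 : ℂ) ^ ((t * u).val) = if u = 0 then 2 else 0 := by
  rw [zmod2_sum]
  rcases (show ∀ u : ZMod 2, u = 0 ∨ u = 1 by decide) u with rfl | rfl <;> norm_num [show ((1:ZMod 2)).val = 1 from rfl, show ((0:ZMod 2)*(0:ZMod 2)).val = 0 from rfl]

lemma char_sum {n : ℕ} (w : Fin n → ZMod 2) :
    ∑ z : Fin n → ZMod 2, (-1 : ℂ) ^ (∑ i, (z i * w i).val) =
      if w = 0 then (2 : ℂ) ^ n else 0 := by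
  have h1 : ∀ z : Fin n → ZMod 2, (-1 : ℂ) ^ (∑ i, (z i * w i).val)
      = ∏ i, (-1 : ℂ) ^ ((z i * w i).val) := by
    intro z; rw [Finset.prod_pow_eq_pow_sum]
  simp_rw [h1]
  rw [← Fintype.piFinset_univ, ← Finset.prod_univ_sum (fun _ : Fin n => (Finset.univ : Finset (ZMod 2))) (fun i t => (-1:ℂ)^((t * w i).val))]
  by_cases hw : w = 0
  · subst hw
    simp [char2_sum]
  · obtain ⟨i, hi⟩ : ∃ i, w i ≠ 0 := by
      by_contra h; push_neg at h; exact hw (funext h)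
    rw [if_neg hw]
    apply Finset.prod_eq_zero (Finset.mem_univ i)
    rw [char2_sum, if_neg hi]


lemma chi_add (u v : ZMod 2) :
    (-1 : ℂ) ^ ((u + v).val) = (-1 : ℂ) ^ u.val * (-1 : ℂ) ^ v.val := by
  rcases (show ∀ u : ZMod 2, u = 0 ∨ u = 1 by decide) u with rfl | rfl <;>
  rcases (show ∀ u : ZMod 2, u = 0 ∨ u = 1 by decide) v with rfl | rfl <;>
    norm_num [show ((1:ZMod 2)).val = 1 from rfl, show ((0:ZMod 2)).val = 0 from rfl,
      show ((2:ZMod 2)).val = 0 from rfl, show ((1:ZMod 2) + 1) = 0 from rfl]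

lemma zmod2_add_eq_zero {n : ℕ} (a k : Fin n → ZMod 2) : a + k = 0 ↔ a = k := by
  constructor
  · intro h0; funext i
    have := congrFun h0 i
    simp only [Pi.add_apply, Pi.zero_apply] at this
    revert this
    have : ∀ u v : ZMod 2, u + v = 0 → u = v := by decide
    exact this (a i) (k i)
  · intro h0; subst h0; funext i; exact CharTwo.add_self_eq_zero (a i)

lemma char_sum2 {n : ℕ} (a k : Fin n → ZMod 2) :
    ∑ z : Fin n → ZMod 2,
      (-1 : ℂ) ^ (∑ i, (z i * a i).val) * (-1 : ℂ) ^ (∑ i, (z i * k i).val) =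
      if a = k then (2 : ℂ) ^ n else 0 := by
  have h : ∀ z : Fin n → ZMod 2,
      (-1 : ℂ) ^ (∑ i, (z i * a i).val) * (-1 : ℂ) ^ (∑ i, (z i * k i).val)
      = (-1 : ℂ) ^ (∑ i, (z i * (a + k) i).val) := by
    intro z
    rw [← Finset.prod_pow_eq_pow_sum, ← Finset.prod_pow_eq_pow_sum,
      ← Finset.prod_pow_eq_pow_sum, ← Finset.prod_mul_distrib]
    refine Finset.prod_congr rfl fun i _ => ?_
    rw [Pi.add_apply, mul_add, chi_add]
  rw [Finset.sum_congr rfl (fun z _ => h z), char_sum,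
    if_congr (zmod2_add_eq_zero a k) rfl rfl]

lemma conj_pauli {n : ℕ} (x z j k : Fin n → ZMod 2) :
    (starRingEnd ℂ) (pauli x z j k) = pauli x z j k := by
  unfold pauli
  split <;> simp

lemma zmod2_eq_add_iff {n : ℕ} (a a' x : Fin n → ZMod 2) :
    a = a' + x ↔ x = a + a' := by
  constructor
  · intro h; subst h; funext i
    have : ∀ u v : ZMod 2, v = (u + v) + u := by decide
    exact this (a' i) (x i)
  · intro h; subst h; funext i
    have : ∀ u v : ZMod 2, u = v + (u + v) := by decide
    exact this (a i) (a' i)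

lemma pauli_complete {n : ℕ} (a a' j k : Fin n → ZMod 2) :
    ∑ x : Fin n → ZMod 2, ∑ z : Fin n → ZMod 2,
      pauli x z a a' * pauli x z j k =
      if a = j ∧ a' = k then (2 : ℂ) ^ n else 0 := by
  unfold pauli
  have step : ∀ x : Fin n → ZMod 2,
      (∑ z : Fin n → ZMod 2,
        (if a = a' + x then (-1 : ℂ) ^ (∑ i, (z i * a' i).val) else 0) *
        (if j = k + x then (-1 : ℂ) ^ (∑ i, (z i * k i).val) else 0))
      = if x = a + a' then
          ((if x = j + k then (1:ℂ) else 0) * (if a' = k then (2 : ℂ) ^ n else 0))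
        else 0 := by
    intro x
    by_cases h1 : a = a' + x
    · by_cases h2 : j = k + x
      · simp only [if_pos h1, if_pos h2]
        rw [char_sum2 a' k, if_pos ((zmod2_eq_add_iff a a' x).1 h1),
          if_pos ((zmod2_eq_add_iff j k x).1 h2), one_mul]
      · simp only [if_pos h1, if_neg h2, mul_zero, Finset.sum_const_zero]
        rw [if_pos ((zmod2_eq_add_iff a a' x).1 h1),
          if_neg (fun hc => h2 ((zmod2_eq_add_iff j k x).2 hc)), zero_mul]
    · simp only [if_neg h1, zero_mul, Finset.sum_const_zero]
      rw [if_neg (fun hc => h1 ((zmod2_eq_add_iff a a' x).2 hc))]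
  rw [Finset.sum_congr rfl (fun x _ => step x),
    Finset.sum_ite_eq' Finset.univ (a + a')
      (fun x => (if x = j + k then (1:ℂ) else 0) * (if a' = k then (2 : ℂ) ^ n else 0)),
    if_pos (Finset.mem_univ _)]
  by_cases hak : a' = k
  · subst hak
    by_cases haj : a = j
    · subst haj; simp
    · have hne : a + a' ≠ j + a' := fun h => haj (by
        have := congrFun h
        funext i
        have h2 := this i
        simp only [Pi.add_apply] at h2
        exact add_right_cancel h2)
      simp [hne, haj]
  · simp [hak]

lemma zmod2_add_self {n : ℕ} (d : Fin n → ZMod 2) : d + d = 0 :=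
  funext fun i => CharTwo.add_self_eq_zero (d i)

lemma pauli_trace {n : ℕ} (x z : Fin n → ZMod 2) :
    ∑ d : Fin n → ZMod 2, pauli x z d d =
      if x = 0 ∧ z = 0 then (2 : ℂ) ^ n else 0 := by
  unfold pauli
  by_cases hx : x = 0
  · subst hx
    simp only [add_zero, eq_self_iff_true, if_true, true_and]
    have h2 : ∀ d : Fin n → ZMod 2,
        (-1:ℂ) ^ (∑ i, (z i * d i).val) = (-1:ℂ) ^ (∑ i, (d i * z i).val) := by
      intro d; congr 1; exact Finset.sum_congr rfl fun i _ => by rw [mul_comm]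
    rw [Finset.sum_congr rfl (fun d _ => h2 d), char_sum z]
  · rw [if_neg (fun hc => hx hc.1)]
    apply Finset.sum_eq_zero
    intro d _
    rw [if_neg (fun hc : d = d + x => hx (by
      have h2 := ((zmod2_eq_add_iff d d x).1 hc).symm
      rwa [zmod2_add_self, eq_comm] at h2))]

lemma pauli_sq_sum {n : ℕ} (x z : Fin n → ZMod 2) :
    ∑ c : Fin n → ZMod 2, ∑ c' : Fin n → ZMod 2,
      pauli x z c c' * (starRingEnd ℂ) (pauli x z c c') = (2 : ℂ) ^ n := by
  simp_rw [conj_pauli]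
  unfold pauli
  have step : ∀ c c' : Fin n → ZMod 2,
      (if c = c' + x then (-1 : ℂ) ^ (∑ i, (z i * c' i).val) else 0) *
      (if c = c' + x then (-1 : ℂ) ^ (∑ i, (z i * c' i).val) else 0)
      = if c = c' + x then (1:ℂ) else 0 := by
    intro c c'
    by_cases h : c = c' + x
    · rw [if_pos h, if_pos h, ← pow_add, ← two_mul, pow_mul]; norm_num
    · simp [h]
  simp_rw [step]
  rw [Finset.sum_comm]
  have inner : ∀ c' : Fin n → ZMod 2,
      (∑ c : Fin n → ZMod 2, if c = c' + x then (1:ℂ) else 0) = 1 := by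
    intro c'
    rw [Finset.sum_ite_eq' Finset.univ (c' + x) (fun _ => (1:ℂ)),
      if_pos (Finset.mem_univ _)]
  rw [Finset.sum_congr rfl (fun c' _ => inner c'), Finset.sum_const, Finset.card_univ]
  simp [Fintype.card_fun]

lemma pauli_complete' {n : ℕ} (u v : (Fin n → ZMod 2) × (Fin n → ZMod 2)) :
    ∑ w : (Fin n → ZMod 2) × (Fin n → ZMod 2),
      pauli w.1 w.2 u.1 u.2 * pauli w.1 w.2 v.1 v.2 =
      if u = v then (2:ℂ)^n else 0 := by
  rw [Fintype.sum_prod_type]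
  rw [pauli_complete]
  exact if_congr (Prod.ext_iff).symm rfl rfl

lemma sum_pauli_quad {n : ℕ} (M : (Fin n → ZMod 2) → (Fin n → ZMod 2) → ℂ) :
    ∑ w : (Fin n → ZMod 2) × (Fin n → ZMod 2),
      (∑ u : (Fin n → ZMod 2) × (Fin n → ZMod 2), pauli w.1 w.2 u.1 u.2 * M u.1 u.2) *
        (starRingEnd ℂ)
          (∑ u : (Fin n → ZMod 2) × (Fin n → ZMod 2), pauli w.1 w.2 u.1 u.2 * M u.1 u.2)
    = (2:ℂ)^n * ∑ u : (Fin n → ZMod 2) × (Fin n → ZMod 2),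
        M u.1 u.2 * (starRingEnd ℂ) (M u.1 u.2) := by
  simp only [map_sum, _root_.map_mul, conj_pauli]
  have expand : ∀ w : (Fin n → ZMod 2) × (Fin n → ZMod 2),
      (∑ u : (Fin n → ZMod 2) × (Fin n → ZMod 2), pauli w.1 w.2 u.1 u.2 * M u.1 u.2) *
        (∑ v : (Fin n → ZMod 2) × (Fin n → ZMod 2),
          pauli w.1 w.2 v.1 v.2 * (starRingEnd ℂ) (M v.1 v.2))
      = ∑ u : (Fin n → ZMod 2) × (Fin n → ZMod 2),
          ∑ v : (Fin n → ZMod 2) × (Fin n → ZMod 2),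
            (pauli w.1 w.2 u.1 u.2 * pauli w.1 w.2 v.1 v.2) *
              (M u.1 u.2 * (starRingEnd ℂ) (M v.1 v.2)) := by
    intro w
    rw [Finset.sum_mul_sum]
    exact Finset.sum_congr rfl fun u _ => Finset.sum_congr rfl fun v _ => by ring
  rw [Finset.sum_congr rfl (fun w _ => expand w), Finset.sum_comm]
  have inner : ∀ u : (Fin n → ZMod 2) × (Fin n → ZMod 2),
      (∑ w : (Fin n → ZMod 2) × (Fin n → ZMod 2),
        ∑ v : (Fin n → ZMod 2) × (Fin n → ZMod 2),
          (pauli w.1 w.2 u.1 u.2 * pauli w.1 w.2 v.1 v.2) *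
            (M u.1 u.2 * (starRingEnd ℂ) (M v.1 v.2)))
      = (2:ℂ)^n * (M u.1 u.2 * (starRingEnd ℂ) (M u.1 u.2)) := by
    intro u
    rw [Finset.sum_comm]
    have h1 : ∀ v : (Fin n → ZMod 2) × (Fin n → ZMod 2),
        (∑ w : (Fin n → ZMod 2) × (Fin n → ZMod 2),
          (pauli w.1 w.2 u.1 u.2 * pauli w.1 w.2 v.1 v.2) *
            (M u.1 u.2 * (starRingEnd ℂ) (M v.1 v.2)))
        = (if u = v then (2:ℂ)^n else 0) * (M u.1 u.2 * (starRingEnd ℂ) (M v.1 v.2)) := by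
      intro v
      rw [← Finset.sum_mul, pauli_complete']
    rw [Finset.sum_congr rfl (fun v _ => h1 v)]
    simp_rw [ite_mul, zero_mul]
    rw [Finset.sum_ite_eq Finset.univ u
      (fun v => (2:ℂ)^n * (M u.1 u.2 * (starRingEnd ℂ) (M v.1 v.2))),
      if_pos (Finset.mem_univ _)]
  rw [Finset.sum_congr rfl (fun u _ => inner u), ← Finset.mul_sum]

lemma G_entry {nA nB nC nD : ℕ}
    (U : Matrix ((Fin nC → ZMod 2) × (Fin nD → ZMod 2))
      ((Fin nA → ZMod 2) × (Fin nB → ZMod 2)) ℂ)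
    (x z : Fin nA → ZMod 2) (c₀ : ℂ)
    (PC : Matrix (Fin nC → ZMod 2) (Fin nC → ZMod 2) ℂ)
    (PD : Matrix (Fin nD → ZMod 2) (Fin nD → ZMod 2) ℂ)
    (h : U * (pauli x z ⊗ₖ (1 : Matrix (Fin nB → ZMod 2) (Fin nB → ZMod 2) ℂ)) * Uᴴ
        = c₀ • (PC ⊗ₖ PD))
    (r s : (Fin nC → ZMod 2) × (Fin nD → ZMod 2)) :
    ∑ a : Fin nA → ZMod 2, ∑ a' : Fin nA → ZMod 2, ∑ b : Fin nB → ZMod 2,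
      U r (a, b) * pauli x z a a' * (starRingEnd ℂ) (U s (a', b))
    = c₀ * (PC r.1 s.1 * PD r.2 s.2) := by
  rw [← Matrix.ext_iff] at h
  have h2 := h r s
  simp only [Matrix.mul_apply, Matrix.conjTranspose_apply, Matrix.kroneckerMap_apply,
    Matrix.one_apply, Matrix.smul_apply, smul_eq_mul, Fintype.sum_prod_type,
    mul_ite, mul_one, mul_zero, ite_mul, zero_mul, Finset.sum_ite_eq', Finset.mem_univ,
    if_true, Finset.sum_mul, Complex.star_def] at h2
  rw [← h2, Finset.sum_comm]
  exact Finset.sum_congr rfl fun a' _ => Finset.sum_comm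

noncomputable def Fm {nA nB nC nD : ℕ}
    (U : Matrix ((Fin nC → ZMod 2) × (Fin nD → ZMod 2))
      ((Fin nA → ZMod 2) × (Fin nB → ZMod 2)) ℂ)
    (c c' : Fin nC → ZMod 2) (a a' : Fin nA → ZMod 2) : ℂ :=
  ∑ d : Fin nD → ZMod 2, ∑ b : Fin nB → ZMod 2,
    U (c, d) (a, b) * (starRingEnd ℂ) (U (c', d) (a', b))

lemma conj_Fm {nA nB nC nD : ℕ}
    (U : Matrix ((Fin nC → ZMod 2) × (Fin nD → ZMod 2))
      ((Fin nA → ZMod 2) × (Fin nB → ZMod 2)) ℂ)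
    (c c' : Fin nC → ZMod 2) (a a' : Fin nA → ZMod 2) :
    (starRingEnd ℂ) (Fm U c c' a a') = Fm U c' c a' a := by
  unfold Fm
  simp only [map_sum, _root_.map_mul, Complex.conj_conj]
  exact Finset.sum_congr rfl fun d _ => Finset.sum_congr rfl fun b _ => by ring

lemma H_eval {nA nB nC nD : ℕ}
    (U : Matrix ((Fin nC → ZMod 2) × (Fin nD → ZMod 2))
      ((Fin nA → ZMod 2) × (Fin nB → ZMod 2)) ℂ)
    (x z : Fin nA → ZMod 2) (c₀ : ℂ)
    (xc0 zc0 : Fin nC → ZMod 2) (xd0 zd0 : Fin nD → ZMod 2)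
    (h : U * (pauli x z ⊗ₖ (1 : Matrix (Fin nB → ZMod 2) (Fin nB → ZMod 2) ℂ)) * Uᴴ
        = c₀ • (pauli xc0 zc0 ⊗ₖ pauli xd0 zd0))
    (cc cc' : Fin nC → ZMod 2) :
    (∑ u : (Fin nA → ZMod 2) × (Fin nA → ZMod 2),
        pauli x z u.1 u.2 * Fm U cc cc' u.1 u.2)
    = c₀ * pauli xc0 zc0 cc cc' *
        (if xd0 = 0 ∧ zd0 = 0 then (2:ℂ)^nD else 0) := by
  rw [Fintype.sum_prod_type]
  have step : ∀ a a' : Fin nA → ZMod 2,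
      pauli x z a a' * Fm U cc cc' a a'
      = ∑ d : Fin nD → ZMod 2, ∑ b : Fin nB → ZMod 2,
          U (cc, d) (a, b) * pauli x z a a' * (starRingEnd ℂ) (U (cc', d) (a', b)) := by
    intro a a'
    unfold Fm
    rw [Finset.mul_sum]
    exact Finset.sum_congr rfl fun d _ => by
      rw [Finset.mul_sum]
      exact Finset.sum_congr rfl fun b _ => by ring
  rw [Finset.sum_congr rfl (fun a _ => Finset.sum_congr rfl fun a' _ => step a a')]
  rw [Finset.sum_congr rfl (fun a _ => Finset.sum_comm)]
  rw [Finset.sum_comm]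
  rw [Finset.sum_congr rfl (fun d _ => G_entry U x z c₀ _ _ h (cc, d) (cc', d))]
  have final : ∑ d : Fin nD → ZMod 2,
      c₀ * (pauli xc0 zc0 cc cc' * pauli xd0 zd0 d d)
      = c₀ * pauli xc0 zc0 cc cc' * ∑ d : Fin nD → ZMod 2, pauli xd0 zd0 d d := by
    rw [Finset.mul_sum]
    exact Finset.sum_congr rfl fun d _ => by ring
  rw [final, pauli_trace]

/-- Purity in the Clifford Hayden–Preskill problem:
`Tr(ρ_{RC}²) = N_{I_D} / (d_R d_C)`, where `N_{I_D}` counts Pauli operators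
`P_A` with trivial `D`-component `Λ_D(P_A) ≃ I_D` under
`U(P_A ⊗ I_B)U† = c • (Λ_C(P_A) ⊗ Λ_D(P_A))`. -/
theorem stmt8 (nA nB nC nD : ℕ)
    (U : Matrix ((Fin nC → ZMod 2) × (Fin nD → ZMod 2))
      ((Fin nA → ZMod 2) × (Fin nB → ZMod 2)) ℂ)
    (hU1 : U * Uᴴ = 1) (hU2 : Uᴴ * U = 1)
    (c : (Fin nA → ZMod 2) → (Fin nA → ZMod 2) → ℂ)
    (xc zc : (Fin nA → ZMod 2) → (Fin nA → ZMod 2) → (Fin nC → ZMod 2))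
    (xd zd : (Fin nA → ZMod 2) → (Fin nA → ZMod 2) → (Fin nD → ZMod 2))
    (hClif : ∀ x z : Fin nA → ZMod 2, ‖c x z‖ = 1 ∧
      U * (pauli x z ⊗ₖ (1 : Matrix (Fin nB → ZMod 2) (Fin nB → ZMod 2) ℂ)) * Uᴴ
        = c x z • (pauli (xc x z) (zc x z) ⊗ₖ pauli (xd x z) (zd x z))) :
    (rhoRC nA nB nC nD U * rhoRC nA nB nC nD U).trace
      = (Fintype.card {PA : (Fin nA → ZMod 2) × (Fin nA → ZMod 2) //
            xd PA.1 PA.2 = 0 ∧ zd PA.1 PA.2 = 0} : ℂ)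
          / (2 ^ nA * 2 ^ nC) := by
  have hrho : ∀ p q : (Fin nA → ZMod 2) × (Fin nC → ZMod 2),
      rhoRC nA nB nC nD U p q
        = ((2:ℂ) ^ nA * 2 ^ nB)⁻¹ * Fm U p.2 q.2 p.1 q.1 := fun p q => rfl
  set S : ℂ := ∑ cc : Fin nC → ZMod 2, ∑ cc' : Fin nC → ZMod 2,
      ∑ u : (Fin nA → ZMod 2) × (Fin nA → ZMod 2),
        Fm U cc cc' u.1 u.2 * (starRingEnd ℂ) (Fm U cc cc' u.1 u.2) with hSdef
  have htr : (rhoRC nA nB nC nD U * rhoRC nA nB nC nD U).trace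
      = ((2:ℂ) ^ nA * 2 ^ nB)⁻¹ * ((2:ℂ) ^ nA * 2 ^ nB)⁻¹ * S := by
    rw [hSdef, Matrix.trace]
    simp only [Matrix.diag_apply, Matrix.mul_apply, hrho]
    -- LHS : ∑ p, ∑ q, ((..)⁻¹ * Fm U p.2 q.2 p.1 q.1) * ((..)⁻¹ * Fm U q.2 p.2 q.1 p.1)
    have e1 : ∀ p q : (Fin nA → ZMod 2) × (Fin nC → ZMod 2),
        (((2:ℂ) ^ nA * 2 ^ nB)⁻¹ * Fm U p.2 q.2 p.1 q.1) *
          (((2:ℂ) ^ nA * 2 ^ nB)⁻¹ * Fm U q.2 p.2 q.1 p.1)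
        = ((2:ℂ) ^ nA * 2 ^ nB)⁻¹ * ((2:ℂ) ^ nA * 2 ^ nB)⁻¹ *
            (Fm U p.2 q.2 p.1 q.1 * (starRingEnd ℂ) (Fm U p.2 q.2 p.1 q.1)) := by
      intro p q
      rw [conj_Fm]
      ring
    rw [Finset.sum_congr rfl (fun p _ => Finset.sum_congr rfl fun q _ => e1 p q)]
    simp only [← Finset.mul_sum]
    congr 1
    -- reindex : ∑ p, ∑ q over (A × C) pairs  =  ∑ cc, ∑ cc', ∑ u
    rw [Fintype.sum_prod_type]
    have e2 : ∀ a : Fin nA → ZMod 2, ∀ cc : Fin nC → ZMod 2,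
        (∑ q : (Fin nA → ZMod 2) × (Fin nC → ZMod 2),
          Fm U cc q.2 a q.1 * (starRingEnd ℂ) (Fm U cc q.2 a q.1))
        = ∑ cc' : Fin nC → ZMod 2, ∑ a' : Fin nA → ZMod 2,
            Fm U cc cc' a a' * (starRingEnd ℂ) (Fm U cc cc' a a') := by
      intro a cc
      rw [Fintype.sum_prod_type]
      exact Finset.sum_comm
    rw [Finset.sum_congr rfl (fun a _ => Finset.sum_congr rfl fun cc _ => e2 a cc)]
    rw [Finset.sum_comm]
    refine Finset.sum_congr rfl fun cc _ => ?_
    rw [Finset.sum_comm]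
    refine Finset.sum_congr rfl fun cc' _ => ?_
    rw [Fintype.sum_prod_type]
  have hkey : (2:ℂ) ^ nA * S
      = (Fintype.card {PA : (Fin nA → ZMod 2) × (Fin nA → ZMod 2) //
            xd PA.1 PA.2 = 0 ∧ zd PA.1 PA.2 = 0} : ℂ)
          * ((2:ℂ) ^ nD * 2 ^ nD * 2 ^ nC) := by
    have h1 : ∑ cc : Fin nC → ZMod 2, ∑ cc' : Fin nC → ZMod 2,
        ∑ w : (Fin nA → ZMod 2) × (Fin nA → ZMod 2),
          (∑ u : (Fin nA → ZMod 2) × (Fin nA → ZMod 2),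
            pauli w.1 w.2 u.1 u.2 * Fm U cc cc' u.1 u.2) *
          (starRingEnd ℂ) (∑ u : (Fin nA → ZMod 2) × (Fin nA → ZMod 2),
            pauli w.1 w.2 u.1 u.2 * Fm U cc cc' u.1 u.2)
        = (2:ℂ) ^ nA * S := by
      rw [hSdef, Finset.mul_sum]
      refine Finset.sum_congr rfl fun cc _ => ?_
      rw [Finset.mul_sum]
      refine Finset.sum_congr rfl fun cc' _ => ?_
      exact sum_pauli_quad (fun a a' => Fm U cc cc' a a')
    have hw : ∀ w : (Fin nA → ZMod 2) × (Fin nA → ZMod 2),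
        (∑ cc : Fin nC → ZMod 2, ∑ cc' : Fin nC → ZMod 2,
          (∑ u : (Fin nA → ZMod 2) × (Fin nA → ZMod 2),
            pauli w.1 w.2 u.1 u.2 * Fm U cc cc' u.1 u.2) *
          (starRingEnd ℂ) (∑ u : (Fin nA → ZMod 2) × (Fin nA → ZMod 2),
            pauli w.1 w.2 u.1 u.2 * Fm U cc cc' u.1 u.2))
        = if xd w.1 w.2 = 0 ∧ zd w.1 w.2 = 0
            then (2:ℂ) ^ nD * 2 ^ nD * 2 ^ nC else 0 := by
      intro w
      have hH : ∀ cc cc' : Fin nC → ZMod 2,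
          (∑ u : (Fin nA → ZMod 2) × (Fin nA → ZMod 2),
            pauli w.1 w.2 u.1 u.2 * Fm U cc cc' u.1 u.2)
          = c w.1 w.2 * pauli (xc w.1 w.2) (zc w.1 w.2) cc cc' *
              (if xd w.1 w.2 = 0 ∧ zd w.1 w.2 = 0 then (2:ℂ)^nD else 0) :=
        fun cc cc' => H_eval U w.1 w.2 (c w.1 w.2) _ _ _ _ (hClif w.1 w.2).2 cc cc'
      have hct : (starRingEnd ℂ)
          (if xd w.1 w.2 = 0 ∧ zd w.1 w.2 = 0 then (2:ℂ)^nD else 0)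
          = (if xd w.1 w.2 = 0 ∧ zd w.1 w.2 = 0 then (2:ℂ)^nD else 0) := by
        split <;> simp [Complex.conj_ofNat]
      have hcc : c w.1 w.2 * (starRingEnd ℂ) (c w.1 w.2) = 1 := by
        rw [Complex.mul_conj, Complex.normSq_eq_norm_sq,
          (hClif w.1 w.2).1]
        norm_num
      have e3 : ∀ cc cc' : Fin nC → ZMod 2,
          (∑ u : (Fin nA → ZMod 2) × (Fin nA → ZMod 2),
            pauli w.1 w.2 u.1 u.2 * Fm U cc cc' u.1 u.2) *
          (starRingEnd ℂ) (∑ u : (Fin nA → ZMod 2) × (Fin nA → ZMod 2),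
            pauli w.1 w.2 u.1 u.2 * Fm U cc cc' u.1 u.2)
          = ((if xd w.1 w.2 = 0 ∧ zd w.1 w.2 = 0 then (2:ℂ)^nD else 0) *
              (if xd w.1 w.2 = 0 ∧ zd w.1 w.2 = 0 then (2:ℂ)^nD else 0)) *
            (pauli (xc w.1 w.2) (zc w.1 w.2) cc cc' *
              (starRingEnd ℂ) (pauli (xc w.1 w.2) (zc w.1 w.2) cc cc')) := by
        intro cc cc'
        rw [hH cc cc', _root_.map_mul, _root_.map_mul, hct]
        calc c w.1 w.2 * pauli (xc w.1 w.2) (zc w.1 w.2) cc cc' *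
              (if xd w.1 w.2 = 0 ∧ zd w.1 w.2 = 0 then (2:ℂ)^nD else 0) *
              ((starRingEnd ℂ) (c w.1 w.2) *
                (starRingEnd ℂ) (pauli (xc w.1 w.2) (zc w.1 w.2) cc cc') *
                (if xd w.1 w.2 = 0 ∧ zd w.1 w.2 = 0 then (2:ℂ)^nD else 0))
            = (c w.1 w.2 * (starRingEnd ℂ) (c w.1 w.2)) *
              (((if xd w.1 w.2 = 0 ∧ zd w.1 w.2 = 0 then (2:ℂ)^nD else 0) *
                (if xd w.1 w.2 = 0 ∧ zd w.1 w.2 = 0 then (2:ℂ)^nD else 0)) *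
              (pauli (xc w.1 w.2) (zc w.1 w.2) cc cc' *
                (starRingEnd ℂ) (pauli (xc w.1 w.2) (zc w.1 w.2) cc cc'))) := by ring
          _ = _ := by rw [hcc, one_mul]
      rw [Finset.sum_congr rfl (fun cc _ => Finset.sum_congr rfl fun cc' _ => e3 cc cc')]
      simp only [← Finset.mul_sum]
      rw [pauli_sq_sum (xc w.1 w.2) (zc w.1 w.2)]
      by_cases hQ : xd w.1 w.2 = 0 ∧ zd w.1 w.2 = 0 <;> simp [hQ] <;> ring
    have h2 : ∑ cc : Fin nC → ZMod 2, ∑ cc' : Fin nC → ZMod 2,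
        ∑ w : (Fin nA → ZMod 2) × (Fin nA → ZMod 2),
          (∑ u : (Fin nA → ZMod 2) × (Fin nA → ZMod 2),
            pauli w.1 w.2 u.1 u.2 * Fm U cc cc' u.1 u.2) *
          (starRingEnd ℂ) (∑ u : (Fin nA → ZMod 2) × (Fin nA → ZMod 2),
            pauli w.1 w.2 u.1 u.2 * Fm U cc cc' u.1 u.2)
        = (Fintype.card {PA : (Fin nA → ZMod 2) × (Fin nA → ZMod 2) //
            xd PA.1 PA.2 = 0 ∧ zd PA.1 PA.2 = 0} : ℂ)
            * ((2:ℂ) ^ nD * 2 ^ nD * 2 ^ nC) := by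
      rw [Finset.sum_congr rfl (fun cc _ => Finset.sum_comm), Finset.sum_comm]
      rw [Finset.sum_congr rfl (fun w _ => hw w)]
      rw [← Finset.sum_filter, Finset.sum_const, Fintype.card_subtype, nsmul_eq_mul]
    rw [← h1, h2]
  have hdim : (2:ℂ) ^ nC * 2 ^ nD = 2 ^ nA * 2 ^ nB := by
    have h := Matrix.trace_mul_comm U Uᴴ
    rw [hU1, hU2, Matrix.trace_one, Matrix.trace_one] at h
    have h1 : (Fintype.card ((Fin nC → ZMod 2) × (Fin nD → ZMod 2)) : ℂ)
        = (2:ℂ) ^ nC * 2 ^ nD := by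
      simp [Fintype.card_prod, Fintype.card_fun]
    have h2 : (Fintype.card ((Fin nA → ZMod 2) × (Fin nB → ZMod 2)) : ℂ)
        = (2:ℂ) ^ nA * 2 ^ nB := by
      simp [Fintype.card_prod, Fintype.card_fun]
    rw [h1, h2] at h
    exact h
  have hA : ((2:ℂ) ^ nA) ≠ 0 := pow_ne_zero _ two_ne_zero
  have hB : ((2:ℂ) ^ nB) ≠ 0 := pow_ne_zero _ two_ne_zero
  have hC : ((2:ℂ) ^ nC) ≠ 0 := pow_ne_zero _ two_ne_zero
  have hD : ((2:ℂ) ^ nD) ≠ 0 := pow_ne_zero _ two_ne_zero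
  rw [htr]
  set N : ℂ := (Fintype.card {PA : (Fin nA → ZMod 2) × (Fin nA → ZMod 2) //
            xd PA.1 PA.2 = 0 ∧ zd PA.1 PA.2 = 0} : ℂ)
  have hS : S = N * ((2:ℂ) ^ nD * 2 ^ nD * 2 ^ nC) / 2 ^ nA := by
    field_simp
    linear_combination hkey
  rw [hS]
  field_simp
  ring_nf
  linear_combination (N * ((2:ℂ)^nC * 2^nD + 2^nA * 2^nB)) * hdim
end

section
/- In the Clifford Hayden–Preskill setup, perfect decoupling ρ_{RC} = (I_R/d_R) ⊗ (I_C/d_C) holds if and only if the forward time-evolution map Λ_D : Pauli_A → Pauli_D (mod phase) is injective. -/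
open Matrix Kronecker BigOperators

namespace HP

noncomputable def sgn {n : ℕ} (z k : Fin n → ZMod 2) : ℂ :=
  (-1) ^ (∑ i, (z i * k i).val)

variable {n : ℕ}

lemma pauli_apply (x z j k : Fin n → ZMod 2) :
    pauli x z j k = if j = k + x then sgn z k else 0 := rfl

lemma neg_one_pow_congr {a b : ℕ} (h : (a : ZMod 2) = b) : ((-1:ℂ))^a = (-1)^b := by
  rw [neg_one_pow_eq_pow_mod_two, neg_one_pow_eq_pow_mod_two (n := b)]
  rw [ZMod.natCast_eq_natCast_iff] at h
  exact congrArg _ h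

lemma cast_sum_val (f : Fin n → ZMod 2) :
    ((∑ i, (f i).val : ℕ) : ZMod 2) = ∑ i, f i := by
  push_cast
  simp [ZMod.natCast_val, ZMod.cast_id]

lemma sgn_add_right (z k k' : Fin n → ZMod 2) :
    sgn z (k + k') = sgn z k * sgn z k' := by
  unfold sgn
  rw [← pow_add]
  apply neg_one_pow_congr
  rw [Nat.cast_add, cast_sum_val, cast_sum_val, cast_sum_val, ← Finset.sum_add_distrib]
  exact Finset.sum_congr rfl fun i _ => by simp [Pi.add_apply, mul_add]

lemma sgn_comm (z k : Fin n → ZMod 2) : sgn z k = sgn k z := by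
  unfold sgn
  congr 1
  exact Finset.sum_congr rfl fun i _ => by rw [mul_comm]

lemma sgn_add_left (z z' k : Fin n → ZMod 2) :
    sgn (z + z') k = sgn z k * sgn z' k := by
  rw [sgn_comm, sgn_add_right, sgn_comm k z, sgn_comm k z']

lemma sgn_zero_right (z : Fin n → ZMod 2) : sgn z 0 = 1 := by
  simp [sgn]

lemma sgn_zero_left (k : Fin n → ZMod 2) : sgn 0 k = 1 := by
  rw [sgn_comm]; exact sgn_zero_right k

lemma sgn_mul_self (z k : Fin n → ZMod 2) : sgn z k * sgn z k = 1 := by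
  unfold sgn
  rw [← pow_add, ← two_mul, pow_mul]
  simp

lemma sgn_ne_zero (z k : Fin n → ZMod 2) : sgn z k ≠ 0 := by
  unfold sgn
  exact pow_ne_zero _ (by norm_num)

lemma conj_sgn (z k : Fin n → ZMod 2) : (starRingEnd ℂ) (sgn z k) = sgn z k := by
  unfold sgn
  rw [map_pow]; norm_num

end HP
namespace HP
variable {n : ℕ}

lemma zmod2_sum (f : ZMod 2 → ℂ) : ∑ a : ZMod 2, f a = f 0 + f 1 := by
  have : (Finset.univ : Finset (ZMod 2)) = {0, 1} := rfl
  rw [this, Finset.sum_insert (by decide), Finset.sum_singleton]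

lemma zmod2_cases (a : ZMod 2) : a = 0 ∨ a = 1 := by revert a; decide

lemma sum_sgn (k : Fin n → ZMod 2) :
    ∑ z : Fin n → ZMod 2, sgn z k = if k = 0 then (2:ℂ)^n else 0 := by
  have : ∀ z : Fin n → ZMod 2, sgn z k = ∏ i, (-1:ℂ) ^ ((z i * k i).val) := by
    intro z; unfold sgn; rw [← Finset.prod_pow_eq_pow_sum]
  simp_rw [this]
  rw [← Fintype.prod_sum (fun i (a : ZMod 2) => (-1:ℂ) ^ ((a * k i).val))]
  have hco : ∀ i, (∑ a : ZMod 2, (-1:ℂ) ^ ((a * k i).val))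
      = if k i = 0 then 2 else 0 := by
    intro i
    rw [zmod2_sum]
    rcases zmod2_cases (k i) with h | h <;> simp [h, ZMod.val_one] <;> norm_num
  simp_rw [hco]
  by_cases hk : k = 0
  · simp [hk]
  · rw [if_neg hk]
    obtain ⟨i, hi⟩ : ∃ i, k i ≠ 0 := by
      by_contra h; push_neg at h; exact hk (funext h)
    exact Finset.prod_eq_zero (Finset.mem_univ i) (by simp [hi])

end HP
namespace HP
variable {n : ℕ}

lemma pauli_zero : pauli (0 : Fin n → ZMod 2) 0 = 1 := by
  ext j k
  rw [pauli_apply, sgn_zero_left]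
  simp [Matrix.one_apply, eq_comm]

lemma trace_pauli (x z : Fin n → ZMod 2) :
    Matrix.trace (pauli x z) = if x = 0 ∧ z = 0 then (2:ℂ)^n else 0 := by
  unfold Matrix.trace Matrix.diag
  simp_rw [pauli_apply]
  by_cases hx : x = 0
  · subst hx
    have hh : ∀ k : Fin n → ZMod 2, (if k = k + 0 then sgn z k else 0) = sgn z k := by
      intro k; rw [add_zero, if_pos rfl]
    rw [Finset.sum_congr rfl fun k _ => hh k]
    rw [show (∑ k : Fin n → ZMod 2, sgn z k) = ∑ k, sgn k z from
      Finset.sum_congr rfl fun k _ => sgn_comm z k, sum_sgn]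
    simp [eq_comm]
  · have : ∀ k : Fin n → ZMod 2, ¬ (k = k + x) := by
      intro k h
      exact hx (left_eq_add.mp h)
    simp [this, hx]

-- char 2 vector facts
lemma add_self (a : Fin n → ZMod 2) : a + a = 0 := by
  ext i; exact CharTwo.add_self_eq_zero _

lemma two_nsmul' (a : Fin n → ZMod 2) : (2:ℕ) • a = 0 := by
  rw [two_smul]; exact add_self a

lemma two_zsmul' (a : Fin n → ZMod 2) : (2:ℤ) • a = 0 := by
  rw [two_smul]; exact add_self a

lemma two_mul' (a : Fin n → ZMod 2) : 2 * a = 0 := by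
  have h2 : (2 : Fin n → ZMod 2) = 0 := by
    ext i
    show (2 : ZMod 2) = 0
    decide
  rw [h2, zero_mul]

lemma pauli_mul (x z x' z' : Fin n → ZMod 2) :
    pauli x z * pauli x' z' = sgn z x' • pauli (x + x') (z + z') := by
  ext j k
  rw [Matrix.mul_apply]
  simp_rw [pauli_apply, Matrix.smul_apply, pauli_apply]
  rw [Finset.sum_eq_single (k + x')]
  · rw [if_pos rfl]
    by_cases h : j = k + (x + x')
    · rw [if_pos (by rw [h]; abel), if_pos h, sgn_add_right, sgn_add_left, smul_eq_mul]
      ring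
    · rw [if_neg (by intro hc; exact h (by rw [hc]; abel)), if_neg h, zero_mul, smul_zero]
  · intro m _ hm
    rw [if_neg hm, mul_zero]
  · simp

lemma pauli_completeness (a a' b b' : Fin n → ZMod 2) :
    ∑ x : Fin n → ZMod 2, ∑ z : Fin n → ZMod 2,
      pauli x z a a' * pauli x z b b'
      = if a = b ∧ a' = b' then (2:ℂ)^n else 0 := by
  simp_rw [pauli_apply]
  have key : ∀ x : Fin n → ZMod 2,
      (∑ z : Fin n → ZMod 2, (if a = a' + x then sgn z a' else 0) *
        (if b = b' + x then sgn z b' else 0))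
      = if a = a' + x then (if b = b' + x then
          (if a' = b' then (2:ℂ)^n else 0) else 0) else 0 := by
    intro x
    by_cases h1 : a = a' + x
    · by_cases h2 : b = b' + x
      · simp_rw [if_pos h1, if_pos h2, ← sgn_add_right]
        rw [show (∑ z : Fin n → ZMod 2, sgn z (a' + b')) = _ from sum_sgn _]
        by_cases h3 : a' = b'
        · subst h3; simp [add_self]
        · rw [if_neg h3, if_neg (fun hc : a' + b' = 0 => h3 (by
            have := congrArg (fun v => v + b') hc
            simpa [add_assoc, add_self] using this))]
      · simp [h1, h2]
    · simp [h1]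
  rw [Finset.sum_congr rfl (fun x _ => key x)]
  rw [Finset.sum_eq_single (a + a')]
  · rw [if_pos (by abel_nf; simp [two_nsmul', two_zsmul', two_mul'])]
    by_cases h2 : b = b' + (a + a')
    · rw [if_pos h2]
      by_cases h3 : a' = b'
      · have hab : a = b := by rw [h2, ← h3]; abel_nf; simp [two_nsmul', two_zsmul', two_mul']
        rw [if_pos h3, if_pos ⟨hab, h3⟩]
      · rw [if_neg h3, if_neg (fun hc => h3 hc.2)]
    · rw [if_neg h2, if_neg (fun hc => h2 (by rw [← hc.1, ← hc.2]; abel_nf; simp [two_nsmul', two_zsmul', two_mul']))]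
  · intro m _ hm
    rw [if_neg (fun hc : a = a' + m => hm (by rw [hc]; abel_nf; simp [two_nsmul', two_zsmul', two_mul']))]
  · simp

end HP
namespace HP
variable {n : ℕ}

lemma add_eq_zero_iff' (a b : Fin n → ZMod 2) : a + b = 0 ↔ a = b := by
  constructor
  · intro h
    have := congrArg (fun v => v + b) h
    simpa [add_assoc, add_self] using this
  · intro h; rw [h, add_self]

lemma pauli_orth (x z x' z' : Fin n → ZMod 2) :
    ∑ a : Fin n → ZMod 2, ∑ a' : Fin n → ZMod 2,
      pauli x z a a' * pauli x' z' a a'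
      = if x = x' ∧ z = z' then (2:ℂ)^n else 0 := by
  simp_rw [pauli_apply]
  rw [Finset.sum_comm]
  have key : ∀ a' : Fin n → ZMod 2,
      (∑ a : Fin n → ZMod 2, (if a = a' + x then sgn z a' else 0) *
        (if a = a' + x' then sgn z' a' else 0))
      = if x = x' then sgn (z + z') a' else 0 := by
    intro a'
    rw [Finset.sum_eq_single (a' + x)]
    · rw [if_pos rfl]
      by_cases h : x = x'
      · rw [if_pos (by rw [h]), if_pos h, sgn_add_left]
      · rw [if_neg (fun hc => h (add_left_cancel hc)), mul_zero, if_neg h]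
    · intro m _ hm
      rw [if_neg hm, zero_mul]
    · simp
  rw [Finset.sum_congr rfl fun a' _ => key a']
  by_cases h : x = x'
  · simp_rw [if_pos h]
    rw [show (∑ a' : Fin n → ZMod 2, sgn (z+z') a') = ∑ a', sgn a' (z+z') from
      Finset.sum_congr rfl fun a' _ => sgn_comm _ _, sum_sgn]
    by_cases h2 : z = z'
    · rw [if_pos ((add_eq_zero_iff' z z').mpr h2), if_pos ⟨h, h2⟩]
    · rw [if_neg (fun hc => h2 ((add_eq_zero_iff' z z').mp hc)),
        if_neg (fun hc => h2 hc.2)]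
  · simp [h]

lemma sgn_single (z : Fin n → ZMod 2) (i : Fin n) :
    sgn z (Pi.single i 1) = (-1:ℂ) ^ (z i).val := by
  unfold sgn
  congr 1
  rw [Finset.sum_eq_single i]
  · simp
  · intro m _ hm; simp [Pi.single_eq_of_ne hm]
  · simp

lemma zmod2_val_pow_inj (a b : ZMod 2) (h : ((-1:ℂ)) ^ a.val = (-1) ^ b.val) :
    a = b := by
  rcases zmod2_cases a with ha | ha <;> rcases zmod2_cases b with hb | hb <;>
    subst ha <;> subst hb <;> first
    | rfl
    | (exfalso; rw [ZMod.val_one, ZMod.val_zero] at h; norm_num at h)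

lemma sgn_inj (z z' : Fin n → ZMod 2) (h : ∀ k, sgn z k = sgn z' k) : z = z' := by
  ext i
  have := h (Pi.single i 1)
  rw [sgn_single, sgn_single] at this
  exact zmod2_val_pow_inj _ _ this

end HP
namespace HP

lemma kron_pauli_ext {nC nD : ℕ} {α β : ℂ} (hα : α ≠ 0)
    {u v u' v' : Fin nC → ZMod 2} {s t s' t' : Fin nD → ZMod 2}
    (h : α • (pauli u v ⊗ₖ pauli s t) = β • (pauli u' v' ⊗ₖ pauli s' t')) :
    u = u' ∧ v = v' ∧ s = s' ∧ t = t' ∧ α = β := by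
  have he : ∀ (k1 : Fin nC → ZMod 2) (k2 : Fin nD → ZMod 2),
      α * (sgn v k1 * sgn t k2)
      = β * ((if u + k1 = k1 + u' then sgn v' k1 else 0) *
          (if s + k2 = k2 + s' then sgn t' k2 else 0)) := by
    intro k1 k2
    have h0 := congrFun (congrFun h (u + k1, s + k2)) (k1, k2)
    simp only [Matrix.smul_apply, Matrix.kroneckerMap_apply, smul_eq_mul] at h0
    rw [pauli_apply, pauli_apply, pauli_apply, pauli_apply,
      if_pos (add_comm u k1), if_pos (add_comm s k2)] at h0
    exact h0
  have h00 := he 0 0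
  rw [sgn_zero_right, sgn_zero_right, sgn_zero_right, sgn_zero_right, mul_one,
    mul_one] at h00
  have hu : u = u' := by
    by_contra hc
    rw [if_neg (by simpa [add_comm] using hc)] at h00
    simp at h00
    exact hα h00
  have hs : s = s' := by
    by_contra hc
    rw [if_pos (by rw [hu, add_comm]), if_neg (by simpa [add_comm] using hc)] at h00
    simp at h00
    exact hα h00
  have hab : α = β := by
    rw [if_pos (by rw [hu, add_comm]), if_pos (by rw [hs, add_comm]), mul_one,
      mul_one] at h00
    exact h00
  have hβ : β ≠ 0 := hab ▸ hα
  have hv : v = v' := by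
    apply sgn_inj
    intro k1
    have := he k1 0
    rw [sgn_zero_right, sgn_zero_right, mul_one, if_pos (by rw [hu, add_comm]),
      if_pos (by rw [hs, add_comm]), mul_one, hab] at this
    exact mul_left_cancel₀ hβ this
  have ht : t = t' := by
    apply sgn_inj
    intro k2
    have := he 0 k2
    rw [sgn_zero_right, sgn_zero_right, one_mul, if_pos (by rw [hu, add_comm]),
      if_pos (by rw [hs, add_comm]), one_mul, hab] at this
    exact mul_left_cancel₀ hβ this
  exact ⟨hu, hv, hs, ht, hab⟩

end HP
namespace HP

variable {nA nB nC nD : ℕ}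
  (U : Matrix ((Fin nC → ZMod 2) × (Fin nD → ZMod 2))
    ((Fin nA → ZMod 2) × (Fin nB → ZMod 2)) ℂ)
  (c : (Fin nA → ZMod 2) → (Fin nA → ZMod 2) → ℂ)
  (xc zc : (Fin nA → ZMod 2) → (Fin nA → ZMod 2) → (Fin nC → ZMod 2))
  (xd zd : (Fin nA → ZMod 2) → (Fin nA → ZMod 2) → (Fin nD → ZMod 2))

lemma card_eq (hU1 : U * Uᴴ = 1) (hU2 : Uᴴ * U = 1) :
    ((2:ℂ) ^ nA * 2 ^ nB) = 2 ^ nC * 2 ^ nD := by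
  have h := Matrix.trace_mul_comm U Uᴴ
  rw [hU1, hU2, Matrix.trace_one, Matrix.trace_one] at h
  simp only [Fintype.card_prod, Fintype.card_fun, Fintype.card_fin,
    ZMod.card] at h
  push_cast at h
  linear_combination -h

section Clif

variable (hClif : ∀ x z : Fin nA → ZMod 2, ‖c x z‖ = 1 ∧
    U * (pauli x z ⊗ₖ (1 : Matrix (Fin nB → ZMod 2) (Fin nB → ZMod 2) ℂ)) * Uᴴ
      = c x z • (pauli (xc x z) (zc x z) ⊗ₖ pauli (xd x z) (zd x z)))

include hClif

lemma c_ne_zero (x z : Fin nA → ZMod 2) : c x z ≠ 0 := by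
  intro h
  have := (hClif x z).1
  rw [h] at this
  simp at this

lemma hzero (hU1 : U * Uᴴ = 1) :
    c 0 0 = 1 ∧ xc 0 0 = 0 ∧ zc 0 0 = 0 ∧ xd 0 0 = 0 ∧ zd 0 0 = 0 := by
  have h := (hClif 0 0).2
  rw [pauli_zero, Matrix.one_kronecker_one, Matrix.mul_one, hU1] at h
  have h1 : (1:ℂ) • ((pauli (0 : Fin nC → ZMod 2) 0) ⊗ₖ (pauli (0 : Fin nD → ZMod 2) 0))
      = c 0 0 • (pauli (xc 0 0) (zc 0 0) ⊗ₖ pauli (xd 0 0) (zd 0 0)) := by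
    rw [pauli_zero, pauli_zero, Matrix.one_kronecker_one, one_smul, ← h]
  obtain ⟨h2, h3, h4, h5, h6⟩ := kron_pauli_ext one_ne_zero h1
  exact ⟨h6.symm, h2.symm, h3.symm, h4.symm, h5.symm⟩

lemma hom_add (hU2 : Uᴴ * U = 1) (x z x' z' : Fin nA → ZMod 2) :
    xc (x + x') (z + z') = xc x z + xc x' z' ∧
    zc (x + x') (z + z') = zc x z + zc x' z' ∧
    xd (x + x') (z + z') = xd x z + xd x' z' ∧
    zd (x + x') (z + z') = zd x z + zd x' z' := by
  have e1 : pauli (x + x') (z + z') = sgn z x' • (pauli x z * pauli x' z') := by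
    rw [pauli_mul, smul_smul, sgn_mul_self, one_smul]
  have key : U * (pauli (x + x') (z + z') ⊗ₖ
        (1 : Matrix (Fin nB → ZMod 2) (Fin nB → ZMod 2) ℂ)) * Uᴴ
      = (sgn z x' * (c x z * c x' z') * (sgn (zc x z) (xc x' z') * sgn (zd x z) (xd x' z'))) •
        (pauli (xc x z + xc x' z') (zc x z + zc x' z') ⊗ₖ
          pauli (xd x z + xd x' z') (zd x z + zd x' z')) := by
    rw [e1, Matrix.smul_kronecker, Matrix.mul_smul, Matrix.smul_mul]
    rw [show (pauli x z * pauli x' z') ⊗ₖ (1 : Matrix (Fin nB → ZMod 2) (Fin nB → ZMod 2) ℂ)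
      = (pauli x z ⊗ₖ 1) * (pauli x' z' ⊗ₖ 1) by
        rw [← Matrix.mul_kronecker_mul, Matrix.one_mul]]
    have assoc : U * ((pauli x z ⊗ₖ (1 : Matrix (Fin nB → ZMod 2) (Fin nB → ZMod 2) ℂ)) *
          (pauli x' z' ⊗ₖ 1)) * Uᴴ
        = (U * (pauli x z ⊗ₖ (1 : Matrix (Fin nB → ZMod 2) (Fin nB → ZMod 2) ℂ)) * Uᴴ) *
          (U * (pauli x' z' ⊗ₖ (1 : Matrix (Fin nB → ZMod 2) (Fin nB → ZMod 2) ℂ)) * Uᴴ) := by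
      simp only [Matrix.mul_assoc]
      rw [← Matrix.mul_assoc Uᴴ U _, hU2, Matrix.one_mul]
    rw [assoc, (hClif x z).2, (hClif x' z').2]
    rw [Matrix.smul_mul, Matrix.mul_smul, ← Matrix.mul_kronecker_mul,
      pauli_mul, pauli_mul, Matrix.smul_kronecker, Matrix.kronecker_smul]
    simp only [smul_smul]
    congr 1
    ring
  have h2 := (hClif (x + x') (z + z')).2
  rw [key] at h2
  have hne : (sgn z x' * (c x z * c x' z') *
      (sgn (zc x z) (xc x' z') * sgn (zd x z) (xd x' z'))) ≠ 0 := by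
    apply mul_ne_zero (mul_ne_zero (sgn_ne_zero _ _)
      (mul_ne_zero (c_ne_zero U c xc zc xd zd hClif x z) (c_ne_zero U c xc zc xd zd hClif x' z')))
      (mul_ne_zero (sgn_ne_zero _ _) (sgn_ne_zero _ _))
  obtain ⟨h3, h4, h5, h6, _⟩ := kron_pauli_ext hne h2
  exact ⟨h3.symm, h4.symm, h5.symm, h6.symm⟩

end Clif
end HP
namespace HP

lemma sum_swap4 {α β γ δ : Type*} [Fintype α] [Fintype β] [Fintype γ] [Fintype δ]
    (f : α → β → γ → δ → ℂ) :
    ∑ x : α, ∑ z : β, ∑ r : γ, ∑ s : δ, f x z r s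
    = ∑ r : γ, ∑ s : δ, ∑ x : α, ∑ z : β, f x z r s := by
  have h1 : ∑ x : α, ∑ z : β, ∑ r : γ, ∑ s : δ, f x z r s
      = ∑ p : α × β, ∑ q : γ × δ, f p.1 p.2 q.1 q.2 := by
    simp only [Fintype.sum_prod_type]
  have h2 : ∑ r : γ, ∑ s : δ, ∑ x : α, ∑ z : β, f x z r s
      = ∑ q : γ × δ, ∑ p : α × β, f p.1 p.2 q.1 q.2 := by
    simp only [Fintype.sum_prod_type]
  rw [h1, h2, Finset.sum_comm]

lemma sum_swap3 {α β γ : Type*} [Fintype α] [Fintype β] [Fintype γ]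
    (f : α → β → γ → ℂ) :
    ∑ d : α, ∑ x : β, ∑ z : γ, f d x z
    = ∑ x : β, ∑ z : γ, ∑ d : α, f d x z := by
  have h1 : ∑ d : α, ∑ x : β, ∑ z : γ, f d x z
      = ∑ d : α, ∑ q : β × γ, f d q.1 q.2 := by
    simp only [Fintype.sum_prod_type]
  have h2 : ∑ x : β, ∑ z : γ, ∑ d : α, f d x z
      = ∑ q : β × γ, ∑ d : α, f d q.1 q.2 := by
    simp only [Fintype.sum_prod_type]
  rw [h1, h2, Finset.sum_comm]

variable {nA nB nC nD : ℕ}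
  (U : Matrix ((Fin nC → ZMod 2) × (Fin nD → ZMod 2))
    ((Fin nA → ZMod 2) × (Fin nB → ZMod 2)) ℂ)
  (c : (Fin nA → ZMod 2) → (Fin nA → ZMod 2) → ℂ)
  (xc zc : (Fin nA → ZMod 2) → (Fin nA → ZMod 2) → (Fin nC → ZMod 2))
  (xd zd : (Fin nA → ZMod 2) → (Fin nA → ZMod 2) → (Fin nD → ZMod 2))

section Clif2

variable (hClif : ∀ x z : Fin nA → ZMod 2, ‖c x z‖ = 1 ∧
    U * (pauli x z ⊗ₖ (1 : Matrix (Fin nB → ZMod 2) (Fin nB → ZMod 2) ℂ)) * Uᴴ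
      = c x z • (pauli (xc x z) (zc x z) ⊗ₖ pauli (xd x z) (zd x z)))

include hClif

lemma master (a a' : Fin nA → ZMod 2) (cc cc' : Fin nC → ZMod 2) :
    (2:ℂ)^nA * (∑ d : Fin nD → ZMod 2, ∑ b : Fin nB → ZMod 2,
        U (cc, d) (a, b) * (starRingEnd ℂ) (U (cc', d) (a', b)))
    = ∑ x : Fin nA → ZMod 2, ∑ z : Fin nA → ZMod 2, pauli x z a a' *
        (c x z * pauli (xc x z) (zc x z) cc cc' *
          (if xd x z = 0 ∧ zd x z = 0 then (2:ℂ)^nD else 0)) := by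
  have hT : ∀ x z : Fin nA → ZMod 2,
      (∑ d : Fin nD → ZMod 2, (U * (pauli x z ⊗ₖ
          (1 : Matrix (Fin nB → ZMod 2) (Fin nB → ZMod 2) ℂ)) * Uᴴ) (cc, d) (cc', d))
      = c x z * pauli (xc x z) (zc x z) cc cc' *
          (if xd x z = 0 ∧ zd x z = 0 then (2:ℂ)^nD else 0) := by
    intro x z
    rw [(hClif x z).2]
    simp_rw [Matrix.smul_apply, Matrix.kroneckerMap_apply, smul_eq_mul]
    rw [show (∑ d : Fin nD → ZMod 2, c x z * (pauli (xc x z) (zc x z) cc cc' *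
          pauli (xd x z) (zd x z) d d))
        = c x z * pauli (xc x z) (zc x z) cc cc' *
          (∑ d : Fin nD → ZMod 2, pauli (xd x z) (zd x z) d d) by
        rw [Finset.mul_sum]; exact Finset.sum_congr rfl fun d _ => by ring]
    have : (∑ d : Fin nD → ZMod 2, pauli (xd x z) (zd x z) d d)
        = Matrix.trace (pauli (xd x z) (zd x z)) := rfl
    rw [this, trace_pauli]
  have hD : ∀ d : Fin nD → ZMod 2,
      (∑ x : Fin nA → ZMod 2, ∑ z : Fin nA → ZMod 2, pauli x z a a' *
        (U * (pauli x z ⊗ₖ (1 : Matrix (Fin nB → ZMod 2) (Fin nB → ZMod 2) ℂ)) * Uᴴ)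
          (cc, d) (cc', d))
      = (2:ℂ)^nA * ∑ b : Fin nB → ZMod 2,
          U (cc, d) (a, b) * (starRingEnd ℂ) (U (cc', d) (a', b)) := by
    intro d
    have hentry : ∀ x z : Fin nA → ZMod 2,
        (U * (pauli x z ⊗ₖ (1 : Matrix (Fin nB → ZMod 2) (Fin nB → ZMod 2) ℂ)) * Uᴴ)
          (cc, d) (cc', d)
        = ∑ r : (Fin nA → ZMod 2) × (Fin nB → ZMod 2),
            ∑ s : (Fin nA → ZMod 2) × (Fin nB → ZMod 2),
            U (cc, d) s * (pauli x z s.1 r.1 * (if s.2 = r.2 then (1:ℂ) else 0)) *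
              (starRingEnd ℂ) (U (cc', d) r) := by
      intro x z
      rw [Matrix.mul_apply]
      refine Finset.sum_congr rfl fun r _ => ?_
      rw [Matrix.mul_apply, Matrix.conjTranspose_apply, Finset.sum_mul]
      refine Finset.sum_congr rfl fun s _ => ?_
      rw [Matrix.kroneckerMap_apply, Matrix.one_apply]
      rfl
    simp_rw [hentry, Finset.mul_sum]
    rw [sum_swap4 (fun x z r s => pauli x z a a' *
      (U (cc, d) s * (pauli x z s.1 r.1 * (if s.2 = r.2 then (1:ℂ) else 0)) *
        (starRingEnd ℂ) (U (cc', d) r)))]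
    have inner : ∀ r s : (Fin nA → ZMod 2) × (Fin nB → ZMod 2),
        (∑ x : Fin nA → ZMod 2, ∑ z : Fin nA → ZMod 2, pauli x z a a' *
          (U (cc, d) s * (pauli x z s.1 r.1 * (if s.2 = r.2 then (1:ℂ) else 0)) *
            (starRingEnd ℂ) (U (cc', d) r)))
        = (if a = s.1 ∧ a' = r.1 then (2:ℂ)^nA else 0) *
            ((if s.2 = r.2 then (1:ℂ) else 0) *
              (U (cc, d) s * (starRingEnd ℂ) (U (cc', d) r))) := by
      intro r s
      have hre : ∀ x z : Fin nA → ZMod 2, pauli x z a a' *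
          (U (cc, d) s * (pauli x z s.1 r.1 * (if s.2 = r.2 then (1:ℂ) else 0)) *
            (starRingEnd ℂ) (U (cc', d) r))
          = (pauli x z a a' * pauli x z s.1 r.1) *
            ((if s.2 = r.2 then (1:ℂ) else 0) *
              (U (cc, d) s * (starRingEnd ℂ) (U (cc', d) r))) := fun x z => by ring
      simp_rw [hre, ← Finset.sum_mul]
      rw [pauli_completeness]
    rw [Finset.sum_congr rfl fun r _ => Finset.sum_congr rfl fun s _ => inner r s]
    -- collapse the delta functions
    simp only [Fintype.sum_prod_type, ite_and, ite_mul, mul_ite, zero_mul, mul_zero,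
      Finset.sum_ite_eq, Finset.sum_ite_eq', Finset.mem_univ, if_true, one_mul, mul_one,
      Finset.mul_sum]
    rw [Finset.sum_comm]
    simp only [Finset.sum_ite_eq, Finset.mem_univ, if_true]
  calc (2:ℂ)^nA * (∑ d : Fin nD → ZMod 2, ∑ b : Fin nB → ZMod 2,
        U (cc, d) (a, b) * (starRingEnd ℂ) (U (cc', d) (a', b)))
      = ∑ d : Fin nD → ZMod 2, (2:ℂ)^nA * ∑ b : Fin nB → ZMod 2,
          U (cc, d) (a, b) * (starRingEnd ℂ) (U (cc', d) (a', b)) := Finset.mul_sum _ _ _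
    _ = ∑ d : Fin nD → ZMod 2, ∑ x : Fin nA → ZMod 2, ∑ z : Fin nA → ZMod 2,
          pauli x z a a' * (U * (pauli x z ⊗ₖ
            (1 : Matrix (Fin nB → ZMod 2) (Fin nB → ZMod 2) ℂ)) * Uᴴ) (cc, d) (cc', d) :=
        Finset.sum_congr rfl fun d _ => (hD d).symm
    _ = ∑ x : Fin nA → ZMod 2, ∑ z : Fin nA → ZMod 2, ∑ d : Fin nD → ZMod 2,
          pauli x z a a' * (U * (pauli x z ⊗ₖ
            (1 : Matrix (Fin nB → ZMod 2) (Fin nB → ZMod 2) ℂ)) * Uᴴ) (cc, d) (cc', d) :=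
        sum_swap3 _
    _ = ∑ x : Fin nA → ZMod 2, ∑ z : Fin nA → ZMod 2, pauli x z a a' *
          (c x z * pauli (xc x z) (zc x z) cc cc' *
            (if xd x z = 0 ∧ zd x z = 0 then (2:ℂ)^nD else 0)) := by
        refine Finset.sum_congr rfl fun x _ => Finset.sum_congr rfl fun z _ => ?_
        rw [← hT x z, Finset.mul_sum]

end Clif2
end HP
/-- Perfect decoupling `ρ_{RC} = (I_R/d_R) ⊗ (I_C/d_C)` holds iff the
forward time-evolution map `Λ_D : Pauli_A → Pauli_D` (mod phase) is
injective. -/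
theorem stmt9 (nA nB nC nD : ℕ)
    (U : Matrix ((Fin nC → ZMod 2) × (Fin nD → ZMod 2))
      ((Fin nA → ZMod 2) × (Fin nB → ZMod 2)) ℂ)
    (hU1 : U * Uᴴ = 1) (hU2 : Uᴴ * U = 1)
    (c : (Fin nA → ZMod 2) → (Fin nA → ZMod 2) → ℂ)
    (xc zc : (Fin nA → ZMod 2) → (Fin nA → ZMod 2) → (Fin nC → ZMod 2))
    (xd zd : (Fin nA → ZMod 2) → (Fin nA → ZMod 2) → (Fin nD → ZMod 2))
    (hClif : ∀ x z : Fin nA → ZMod 2, ‖c x z‖ = 1 ∧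
      U * (pauli x z ⊗ₖ (1 : Matrix (Fin nB → ZMod 2) (Fin nB → ZMod 2) ℂ)) * Uᴴ
        = c x z • (pauli (xc x z) (zc x z) ⊗ₖ pauli (xd x z) (zd x z))) :
    rhoRC nA nB nC nD U = ((2 ^ nA * 2 ^ nC : ℂ))⁻¹ • 1
      ↔ Function.Injective
          (fun PA : (Fin nA → ZMod 2) × (Fin nA → ZMod 2) =>
            (xd PA.1 PA.2, zd PA.1 PA.2)) := by
  have h0 := HP.hzero U c xc zc xd zd hClif hU1
  have hcard := HP.card_eq U hU1 hU2
  have hA0 : (2:ℂ)^nA ≠ 0 := pow_ne_zero _ two_ne_zero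
  have hB0 : (2:ℂ)^nB ≠ 0 := pow_ne_zero _ two_ne_zero
  have hC0 : (2:ℂ)^nC ≠ 0 := pow_ne_zero _ two_ne_zero
  have hD0 : (2:ℂ)^nD ≠ 0 := pow_ne_zero _ two_ne_zero
  constructor
  · -- decoupling → injective
    intro hρ
    -- kernel triviality
    have ker : ∀ x z : Fin nA → ZMod 2, xd x z = 0 → zd x z = 0 → x = 0 ∧ z = 0 := by
      intro x z hxd hzd
      by_contra hne
      set cc : Fin nC → ZMod 2 := xc x z with hcc
      set cc' : Fin nC → ZMod 2 := 0 with hcc'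
      have hSig : ∀ a a' : Fin nA → ZMod 2,
          (∑ x' : Fin nA → ZMod 2, ∑ z' : Fin nA → ZMod 2, pauli x' z' a a' *
            (c x' z' * pauli (xc x' z') (zc x' z') cc cc' *
              (if xd x' z' = 0 ∧ zd x' z' = 0 then (2:ℂ)^nD else 0)))
          = (2:ℂ)^nA * ((2:ℂ)^nA * (2:ℂ)^nB) * rhoRC nA nB nC nD U (a, cc) (a', cc') := by
        intro a a'
        rw [← HP.master U c xc zc xd zd hClif a a' cc cc']
        show _ = (2:ℂ)^nA * ((2:ℂ)^nA * (2:ℂ)^nB) * (((2 ^ nA * 2 ^ nB : ℂ))⁻¹ * _)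
        field_simp
      have hδ : ∀ a a' : Fin nA → ZMod 2,
          (∑ x' : Fin nA → ZMod 2, ∑ z' : Fin nA → ZMod 2, pauli x' z' a a' *
            (c x' z' * pauli (xc x' z') (zc x' z') cc cc' *
              (if xd x' z' = 0 ∧ zd x' z' = 0 then (2:ℂ)^nD else 0)))
          = (2:ℂ)^nA * ((2:ℂ)^nA * (2:ℂ)^nB) * ((2 ^ nA * 2 ^ nC : ℂ))⁻¹ *
              (if a = a' then (1:ℂ) else 0) * (if cc = cc' then (1:ℂ) else 0) := by
        intro a a'
        rw [hSig a a', hρ]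
        simp only [Matrix.smul_apply, Matrix.one_apply, smul_eq_mul]
        by_cases h1 : a = a' <;> by_cases h2 : cc = cc' <;>
          simp [h1, h2, Prod.ext_iff, mul_comm, mul_assoc]
      -- pair against pauli x z
      have T2 : (∑ a : Fin nA → ZMod 2, ∑ a' : Fin nA → ZMod 2, pauli x z a a' *
          (∑ x' : Fin nA → ZMod 2, ∑ z' : Fin nA → ZMod 2, pauli x' z' a a' *
            (c x' z' * pauli (xc x' z') (zc x' z') cc cc' *
              (if xd x' z' = 0 ∧ zd x' z' = 0 then (2:ℂ)^nD else 0))))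
          = (2:ℂ)^nA * (c x z * pauli (xc x z) (zc x z) cc cc' * (2:ℂ)^nD) := by
        simp_rw [Finset.mul_sum]
        rw [HP.sum_swap4 (fun a a' x' z' => pauli x z a a' * (pauli x' z' a a' *
          (c x' z' * pauli (xc x' z') (zc x' z') cc cc' *
            (if xd x' z' = 0 ∧ zd x' z' = 0 then (2:ℂ)^nD else 0))))]
        have inner : ∀ x' z' : Fin nA → ZMod 2,
            (∑ a : Fin nA → ZMod 2, ∑ a' : Fin nA → ZMod 2, pauli x z a a' *
              (pauli x' z' a a' * (c x' z' * pauli (xc x' z') (zc x' z') cc cc' *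
                (if xd x' z' = 0 ∧ zd x' z' = 0 then (2:ℂ)^nD else 0))))
            = (if x = x' ∧ z = z' then (2:ℂ)^nA else 0) *
                (c x' z' * pauli (xc x' z') (zc x' z') cc cc' *
                  (if xd x' z' = 0 ∧ zd x' z' = 0 then (2:ℂ)^nD else 0)) := by
          intro x' z'
          have hre : ∀ a a' : Fin nA → ZMod 2, pauli x z a a' *
              (pauli x' z' a a' * (c x' z' * pauli (xc x' z') (zc x' z') cc cc' *
                (if xd x' z' = 0 ∧ zd x' z' = 0 then (2:ℂ)^nD else 0)))
              = (pauli x z a a' * pauli x' z' a a') *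
                (c x' z' * pauli (xc x' z') (zc x' z') cc cc' *
                  (if xd x' z' = 0 ∧ zd x' z' = 0 then (2:ℂ)^nD else 0)) :=
            fun a a' => by ring
          simp_rw [hre, ← Finset.sum_mul]
          rw [HP.pauli_orth]
        rw [Finset.sum_congr rfl fun x' _ => Finset.sum_congr rfl fun z' _ => inner x' z']
        simp only [ite_and, ite_mul, zero_mul, Finset.sum_ite_irrel, Finset.sum_const_zero,
          Finset.sum_ite_eq, Finset.mem_univ, if_true]
        rw [if_pos hxd, if_pos hzd]
      have T1 : (∑ a : Fin nA → ZMod 2, ∑ a' : Fin nA → ZMod 2, pauli x z a a' *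
          (∑ x' : Fin nA → ZMod 2, ∑ z' : Fin nA → ZMod 2, pauli x' z' a a' *
            (c x' z' * pauli (xc x' z') (zc x' z') cc cc' *
              (if xd x' z' = 0 ∧ zd x' z' = 0 then (2:ℂ)^nD else 0)))) = 0 := by
        rw [Finset.sum_congr rfl fun a _ => Finset.sum_congr rfl fun a' _ => by rw [hδ a a']]
        have : ∀ a a' : Fin nA → ZMod 2, pauli x z a a' *
            ((2:ℂ)^nA * ((2:ℂ)^nA * (2:ℂ)^nB) * ((2 ^ nA * 2 ^ nC : ℂ))⁻¹ *
              (if a = a' then (1:ℂ) else 0) * (if cc = cc' then (1:ℂ) else 0))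
            = ((2:ℂ)^nA * ((2:ℂ)^nA * (2:ℂ)^nB) * ((2 ^ nA * 2 ^ nC : ℂ))⁻¹ *
                (if cc = cc' then (1:ℂ) else 0)) *
              (pauli x z a a' * (if a = a' then (1:ℂ) else 0)) := fun a a' => by ring
        simp_rw [this, ← Finset.mul_sum]
        have htr : (∑ a : Fin nA → ZMod 2, ∑ a' : Fin nA → ZMod 2,
            pauli x z a a' * (if a = a' then (1:ℂ) else 0)) = 0 := by
          have : ∀ a : Fin nA → ZMod 2, (∑ a' : Fin nA → ZMod 2,
              pauli x z a a' * (if a = a' then (1:ℂ) else 0)) = pauli x z a a := by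
            intro a
            rw [Finset.sum_eq_single a]
            · simp
            · intro b _ hb; rw [if_neg (fun hc => hb hc.symm), mul_zero]
            · simp
          rw [Finset.sum_congr rfl fun a _ => this a]
          have := HP.trace_pauli x z
          rw [if_neg hne] at this
          exact this
        rw [htr, mul_zero]
      rw [T1] at T2
      have hpc : pauli (xc x z) (zc x z) cc cc' = 1 := by
        rw [HP.pauli_apply, hcc, hcc', if_pos (by rw [zero_add]), HP.sgn_zero_right]
      rw [hpc] at T2
      have := T2.symm
      rw [mul_one] at this
      exact (mul_ne_zero hA0 (mul_ne_zero
        (HP.c_ne_zero U c xc zc xd zd hClif x z) hD0)) this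
    -- injectivity from kernel triviality
    intro p q hpq
    simp only [Prod.mk.injEq] at hpq
    have hxd : xd (p.1 + q.1) (p.2 + q.2) = 0 := by
      rw [(HP.hom_add U c xc zc xd zd hClif hU2 p.1 p.2 q.1 q.2).2.2.1, hpq.1,
        HP.add_self]
    have hzd : zd (p.1 + q.1) (p.2 + q.2) = 0 := by
      rw [(HP.hom_add U c xc zc xd zd hClif hU2 p.1 p.2 q.1 q.2).2.2.2, hpq.2,
        HP.add_self]
    obtain ⟨h1, h2⟩ := ker _ _ hxd hzd
    exact Prod.ext ((HP.add_eq_zero_iff' _ _).mp h1) ((HP.add_eq_zero_iff' _ _).mp h2)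
  · -- injective → decoupling
    intro hinj
    have ker : ∀ x z : Fin nA → ZMod 2, (xd x z = 0 ∧ zd x z = 0) → x = 0 ∧ z = 0 := by
      intro x z h
      have heq : (fun PA : (Fin nA → ZMod 2) × (Fin nA → ZMod 2) =>
          (xd PA.1 PA.2, zd PA.1 PA.2)) (x, z)
          = (fun PA : (Fin nA → ZMod 2) × (Fin nA → ZMod 2) =>
          (xd PA.1 PA.2, zd PA.1 PA.2)) (0, 0) := by
        simp only [h.1, h.2, h0.2.2.2.1, h0.2.2.2.2]
      have := hinj heq
      exact ⟨congrArg Prod.fst this, congrArg Prod.snd this⟩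
    ext ⟨a, cc⟩ ⟨a', cc'⟩
    have hm := HP.master U c xc zc xd zd hClif a a' cc cc'
    have hSig : (∑ x : Fin nA → ZMod 2, ∑ z : Fin nA → ZMod 2, pauli x z a a' *
        (c x z * pauli (xc x z) (zc x z) cc cc' *
          (if xd x z = 0 ∧ zd x z = 0 then (2:ℂ)^nD else 0)))
        = (if a = a' then (1:ℂ) else 0) * (if cc = cc' then (1:ℂ) else 0) * (2:ℂ)^nD := by
      have term0 : ∀ x z : Fin nA → ZMod 2, ¬(x = 0 ∧ z = 0) → pauli x z a a' *
          (c x z * pauli (xc x z) (zc x z) cc cc' *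
            (if xd x z = 0 ∧ zd x z = 0 then (2:ℂ)^nD else 0)) = 0 := by
        intro x z hxz
        rw [if_neg (fun hc => hxz (ker x z hc)), mul_zero, mul_zero]
      rw [Finset.sum_eq_single 0]
      · rw [Finset.sum_eq_single 0]
        · rw [h0.1, h0.2.1, h0.2.2.1, if_pos ⟨h0.2.2.2.1, h0.2.2.2.2⟩, HP.pauli_zero, HP.pauli_zero]
          simp only [Matrix.one_apply, one_mul]
          by_cases h1 : a = a' <;> by_cases h2 : cc = cc' <;> simp [h1, h2] <;> ring
        · intro z _ hz; exact term0 0 z (fun hc => hz hc.2)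
        · simp
      · intro x _ hx
        exact Finset.sum_eq_zero fun z _ => term0 x z (fun hc => hx hc.1)
      · simp
    rw [hSig] at hm
    show ((2 ^ nA * 2 ^ nB : ℂ))⁻¹ * _ = _
    have hsum : (∑ d : Fin nD → ZMod 2, ∑ b : Fin nB → ZMod 2,
        U (cc, d) (a, b) * (starRingEnd ℂ) (U (cc', d) (a', b)))
        = ((2:ℂ)^nA)⁻¹ * ((if a = a' then (1:ℂ) else 0) *
            (if cc = cc' then (1:ℂ) else 0) * (2:ℂ)^nD) := by
      rw [← hm]
      field_simp
    rw [hsum]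
    simp only [Matrix.smul_apply, Matrix.one_apply, smul_eq_mul, Prod.mk.injEq]
    by_cases h1 : a = a' <;> by_cases h2 : cc = cc' <;>
      simp only [h1, h2, if_true, if_false, and_true, and_false, true_and, false_and,
        mul_one, mul_zero, zero_mul, one_mul, if_neg, ite_false, ite_true]
    · -- main numeric identity
      field_simp
      linear_combination (-1:ℂ) * hcard
end
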